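/- (Existence of a θ-coupling matrix) Let f : Θ → Δ(A) and suppose for each i ∈ [n], f = Σ_{m_i∈M_i} a_i^{m_i} f_i^{m_i} is a convex-combination representation with nonnegative coefficients a_i^{m_i} summing to 1 and f_i^{m_i} : Θ → Δ(A). Then for each fixed θ ∈ Θ, there exists a nonnegative array ā = (a^m)_{m∈M}, M = Π_i M_i, with marginals Σ_{m_{-i}} a^{(m_i, m_{-i})} = a_i^{m_i} for all m_i, i, and a function k^θ : M → Δ(A) such that Σ_{m_{-i}} a^{(m_i, m_{-i})} k^θ(m_i, m_{-i}) = a_i^{m_i} f_i^{m_i}(θ) for all m_i ∈ M_i and all i. Explicitly, one may take ξ(m, α) = (Π_i a_i^{m_i} f_i^{m_i}(α|θ)) / f(α|θ)^{n-1} when f(α|θ) > 0 and 0 otherwise, with a^m = Σ_α ξ(m, α) and k^θ(·|m) = ξ(m, ·)/a^m when a^m > 0. -/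

import Mathlib

open Finset

lemma sum_fiber_prod {ι : Type} [Fintype ι] [DecidableEq ι]
    (M : ι → Type) [∀ i, Fintype (M i)] [∀ i, DecidableEq (M i)]
    (g : ∀ j, M j → ℝ) (i : ι) (mi : M i) :
    (∑ m : ∀ j, M j, if m i = mi then ∏ j, g j (m j) else 0)
      = g i mi * ∏ j ∈ Finset.univ.erase i, ∑ mj, g j mj := by
  classical
  set h : ∀ j, M j → ℝ :=
    Function.update g i (fun mj => if mj = mi then g i mj else 0) with hh
  have h1 : ∀ m : ∀ j, M j,
      (if m i = mi then ∏ j, g j (m j) else 0) = ∏ j, h j (m j) := by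
    intro m
    by_cases hm : m i = mi
    · simp only [hm, if_true]
      apply Finset.prod_congr rfl
      intro j _
      by_cases hj : j = i
      · subst hj; simp [hh, hm]
      · simp [hh, Function.update_of_ne hj]
    · simp only [hm, if_false]
      rw [eq_comm]
      apply Finset.prod_eq_zero (Finset.mem_univ i)
      simp [hh, hm]
  rw [Finset.sum_congr rfl (fun m _ => h1 m), ← Fintype.prod_sum h]
  rw [← Finset.mul_prod_erase Finset.univ _ (Finset.mem_univ i)]
  congr 1
  · simp [hh]
  · apply Finset.prod_congr rfl
    intro j hj
    have hj' : j ≠ i := (Finset.mem_erase.mp hj).1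
    simp [hh, Function.update_of_ne hj']

theorem coupling_matrix_exists
    {ι : Type} [Fintype ι] [DecidableEq ι]
    (M : ι → Type) [∀ i, Fintype (M i)] [∀ i, DecidableEq (M i)]
    {A : Type} [Fintype A]
    (f : A → ℝ) (hf0 : ∀ α, 0 ≤ f α) (hf1 : ∑ α, f α = 1)
    (a : ∀ i, M i → ℝ) (ha0 : ∀ i m, 0 ≤ a i m) (ha1 : ∀ i, ∑ m, a i m = 1)
    (fi : ∀ i, M i → A → ℝ)
    (hfi : ∀ i m, (∀ α, 0 ≤ fi i m α) ∧ ∑ α, fi i m α = 1)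
    (hrep : ∀ i α, f α = ∑ m, a i m * fi i m α) :
    ∃ (abar : (∀ i, M i) → ℝ) (k : (∀ i, M i) → A → ℝ),
      (∀ m, 0 ≤ abar m) ∧
      (∀ (i : ι) (mi : M i), (∑ m : ∀ j, M j, if m i = mi then abar m else 0) = a i mi) ∧
      (∀ m, (∀ α, 0 ≤ k m α) ∧ ∑ α, k m α = 1) ∧
      (∀ (i : ι) (mi : M i) (α : A),
        (∑ m : ∀ j, M j, if m i = mi then abar m * k m α else 0) = a i mi * fi i mi α) := by
  classical
  set ξ : (∀ i, M i) → A → ℝ := fun m α =>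
    if 0 < f α then (∏ i, a i (m i) * fi i (m i) α) / f α ^ (Fintype.card ι - 1)
    else 0 with hξdef
  have hξ0 : ∀ m α, 0 ≤ ξ m α := by
    intro m α
    simp only [hξdef]
    split
    · exact div_nonneg
        (Finset.prod_nonneg fun j _ => mul_nonneg (ha0 j (m j)) ((hfi j (m j)).1 α))
        (by positivity)
    · exact le_refl 0
  -- the key fiber-sum identity
  have key : ∀ (i : ι) (mi : M i) (α : A),
      (∑ m : ∀ j, M j, if m i = mi then ξ m α else 0) = a i mi * fi i mi α := by
    intro i mi α
    by_cases hα : 0 < f α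
    · have hC : (f α) ^ (Fintype.card ι - 1) ≠ 0 := pow_ne_zero _ (ne_of_gt hα)
      have hfiber := sum_fiber_prod M (fun j mj => a j mj * fi j mj α) i mi
      have hstep : (∑ m : ∀ j, M j, if m i = mi then ξ m α else 0)
          = (∑ m : ∀ j, M j, if m i = mi then ∏ j, a j (m j) * fi j (m j) α else 0)
              / f α ^ (Fintype.card ι - 1) := by
        rw [Finset.sum_div]
        apply Finset.sum_congr rfl
        intro m _
        simp only [hξdef, hα, if_true]
        split <;> simp
      rw [hstep, hfiber]
      have hprod : (∏ j ∈ Finset.univ.erase i, ∑ mj, a j mj * fi j mj α)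
          = f α ^ (Fintype.card ι - 1) := by
        rw [Finset.prod_congr rfl (fun j _ => (hrep j α).symm), Finset.prod_const,
          Finset.card_erase_of_mem (Finset.mem_univ i), Finset.card_univ]
      rw [hprod, mul_div_assoc, div_self hC, mul_one]
    · have hfα : f α = 0 := le_antisymm (not_lt.mp hα) (hf0 α)
      have hterm : a i mi * fi i mi α = 0 := by
        have hsum : ∑ m, a i m * fi i m α = 0 := by rw [← hrep i α, hfα]
        have := (Finset.sum_eq_zero_iff_of_nonneg
          (fun m _ => mul_nonneg (ha0 i m) ((hfi i m).1 α))).mp hsum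
        exact this mi (Finset.mem_univ mi)
      rw [hterm]
      apply Finset.sum_eq_zero
      intro m _
      simp [hξdef, hα]
  set abar : (∀ i, M i) → ℝ := fun m => ∑ α, ξ m α with habardef
  have habar0 : ∀ m, 0 ≤ abar m := fun m => Finset.sum_nonneg fun α _ => hξ0 m α
  set k : (∀ i, M i) → A → ℝ := fun m α =>
    if 0 < abar m then ξ m α / abar m else f α with hkdef
  have hak : ∀ m α, abar m * k m α = ξ m α := by
    intro m α
    by_cases hm : 0 < abar m
    · simp only [hkdef, hm, if_true]
      field_simp
    · have h0 : abar m = 0 := le_antisymm (not_lt.mp hm) (habar0 m)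
      have hξz : ξ m α = 0 := by
        have := (Finset.sum_eq_zero_iff_of_nonneg (fun β _ => hξ0 m β)).mp h0
        exact this α (Finset.mem_univ α)
      rw [h0, hξz, zero_mul]
  refine ⟨abar, k, habar0, ?_, ?_, ?_⟩
  · intro i mi
    calc (∑ m : ∀ j, M j, if m i = mi then abar m else 0)
        = ∑ m : ∀ j, M j, ∑ α, (if m i = mi then ξ m α else 0) := by
          apply Finset.sum_congr rfl
          intro m _
          split <;> simp [habardef]
      _ = ∑ α, ∑ m : ∀ j, M j, (if m i = mi then ξ m α else 0) := Finset.sum_comm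
      _ = ∑ α, a i mi * fi i mi α := by
          exact Finset.sum_congr rfl fun α _ => key i mi α
      _ = a i mi := by rw [← Finset.mul_sum, (hfi i mi).2, mul_one]
  · intro m
    constructor
    · intro α
      simp only [hkdef]
      split
      · exact div_nonneg (hξ0 m α) (le_of_lt (by assumption))
      · exact hf0 α
    · by_cases hm : 0 < abar m
      · simp only [hkdef, hm, if_true]
        rw [← Finset.sum_div]; exact div_self (ne_of_gt hm)
      · simp only [hkdef, hm, if_false]
        exact hf1
  · intro i mi α
    rw [← key i mi α]
    apply Finset.sum_congr rfl
    intro m _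
    rw [hak m α]
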